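/- Let f(z) = Σ_{j=1}^{k} f_j(z_j) be a separable convex function on ℝ^k, i.e. each f_j : ℝ → ℝ is convex. Let z ∈ ℝ^k, and let y_1, …, y_l ∈ ℝ^k be vectors that all lie in a common orthant of ℝ^k (i.e. they share a sign pattern from {≤ 0, ≥ 0}^k in every coordinate). Then for arbitrary nonnegative integers λ_1, …, λ_l, f(z + Σ_{i=1}^{l} λ_i y_i) − f(z) ≥ Σ_{i=1}^{l} λ_i · (f(z + y_i) − f(z)). -/

import Mathlib

private lemma aux_superadd (h : ℝ → ℝ) (hc : ConvexOn ℝ Set.univ h) (h0 : h 0 = 0)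
    (s t : ℝ) (hst : 0 ≤ s * t) : h s + h t ≤ h (s + t) := by
  rcases eq_or_ne s 0 with rfl | hs
  · simp [h0]
  rcases eq_or_ne t 0 with rfl | ht
  · simp [h0]
  have hc0 : s + t ≠ 0 := by
    intro hc0
    have ht' : t = -s := by linarith
    rw [ht'] at hst
    have hs2 : s ^ 2 = 0 := le_antisymm (by nlinarith) (sq_nonneg s)
    exact hs (by nlinarith [hs2])
  set c := s + t with hcdef
  have hl : 0 ≤ s / c ∧ 0 ≤ t / c := by
    rcases lt_or_gt_of_ne hs with hsneg | hspos
    · have htneg : t < 0 := by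
        rcases lt_or_gt_of_ne ht with h' | h'
        · exact h'
        · nlinarith
      have hcneg : c < 0 := by rw [hcdef]; linarith
      exact ⟨div_nonneg_of_nonpos hsneg.le hcneg.le,
        div_nonneg_of_nonpos htneg.le hcneg.le⟩
    · have htpos : 0 < t := by
        rcases lt_or_gt_of_ne ht with h' | h'
        · nlinarith
        · exact h'
      have hcpos : 0 < c := by rw [hcdef]; linarith
      exact ⟨div_nonneg hspos.le hcpos.le, div_nonneg htpos.le hcpos.le⟩
  have hsum : s / c + t / c = 1 := by rw [← add_div]; exact div_self hc0
  have h1 : h s ≤ (s / c) * h c := by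
    have := hc.2 (Set.mem_univ c) (Set.mem_univ 0) hl.1 hl.2 hsum
    have hx : (s / c) • c + (t / c) • (0:ℝ) = s := by
      rw [smul_eq_mul, smul_eq_mul, mul_zero, add_zero]; exact div_mul_cancel₀ s hc0
    rw [hx] at this
    simpa [h0] using this
  have h2 : h t ≤ (t / c) * h c := by
    have := hc.2 (Set.mem_univ (0:ℝ)) (Set.mem_univ c) hl.1 hl.2 hsum
    have hx : (s / c) • (0:ℝ) + (t / c) • c = t := by
      rw [smul_eq_mul, smul_eq_mul, mul_zero, zero_add]; exact div_mul_cancel₀ t hc0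
    rw [hx] at this
    simpa [h0] using this
  calc h s + h t ≤ (s / c) * h c + (t / c) * h c := add_le_add h1 h2
    _ = h c := by rw [← add_mul, hsum, one_mul]

private lemma aux_nsmul (h : ℝ → ℝ) (hc : ConvexOn ℝ Set.univ h) (h0 : h 0 = 0)
    (n : ℕ) (t : ℝ) : (n : ℝ) * h t ≤ h ((n : ℝ) * t) := by
  induction n with
  | zero => simp [h0]
  | succ n ih =>
    have hsign : 0 ≤ ((n : ℝ) * t) * t := by nlinarith [sq_nonneg t, Nat.cast_nonneg (α := ℝ) n]
    have hsa := aux_superadd h hc h0 ((n : ℝ) * t) t hsign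
    have e : ((n : ℕ) + 1 : ℝ) * t = (n : ℝ) * t + t := by ring
    push_cast
    rw [e]
    linarith

private lemma aux_sum {ι : Type*} (h : ℝ → ℝ) (hc : ConvexOn ℝ Set.univ h) (h0 : h 0 = 0)
    (t : ι → ℝ) (lam : ι → ℕ) (hsign : (∀ i, 0 ≤ t i) ∨ (∀ i, t i ≤ 0))
    (s : Finset ι) :
    ∑ i ∈ s, (lam i : ℝ) * h (t i) ≤ h (∑ i ∈ s, (lam i : ℝ) * t i) := by
  classical
  induction s using Finset.induction with
  | empty => simp [h0]
  | @insert a s ha ih =>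
    rw [Finset.sum_insert ha, Finset.sum_insert ha]
    have h1 : (lam a : ℝ) * h (t a) ≤ h ((lam a : ℝ) * t a) := aux_nsmul h hc h0 _ _
    have hsgn : 0 ≤ ((lam a : ℝ) * t a) * (∑ i ∈ s, (lam i : ℝ) * t i) := by
      rcases hsign with hp | hn
      · have hnn : 0 ≤ ∑ i ∈ s, (lam i : ℝ) * t i :=
          Finset.sum_nonneg fun i _ => mul_nonneg (Nat.cast_nonneg _) (hp i)
        exact mul_nonneg (mul_nonneg (Nat.cast_nonneg _) (hp a)) hnn
      · have hnp : (∑ i ∈ s, (lam i : ℝ) * t i) ≤ 0 :=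
          Finset.sum_nonpos fun i _ => mul_nonpos_of_nonneg_of_nonpos (Nat.cast_nonneg _) (hn i)
        exact mul_nonneg_of_nonpos_of_nonpos
          (mul_nonpos_of_nonneg_of_nonpos (Nat.cast_nonneg _) (hn a)) hnp
    have h2 := aux_superadd h hc h0 _ _ hsgn
    linarith

theorem separable_convex_superadditive (k l : ℕ)
    (f : Fin k → ℝ → ℝ) (hf : ∀ j, ConvexOn ℝ Set.univ (f j))
    (z : Fin k → ℝ) (y : Fin l → Fin k → ℝ)
    (horthant : ∀ j, (∀ i, 0 ≤ y i j) ∨ (∀ i, y i j ≤ 0))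
    (lam : Fin l → ℕ) :
    ∑ i, (lam i : ℝ) * ((∑ j, f j (z j + y i j)) - ∑ j, f j (z j)) ≤
      (∑ j, f j (z j + ∑ i, (lam i : ℝ) * y i j)) - ∑ j, f j (z j) := by
  set h : Fin k → ℝ → ℝ := fun j t => f j (z j + t) - f j (z j) with hh
  have hconv : ∀ j, ConvexOn ℝ Set.univ (h j) := by
    intro j
    refine ⟨convex_univ, fun x _ yv _ a b ha hb hab => ?_⟩
    have hb' : b = 1 - a := by linarith
    subst hb'
    have key := (hf j).2 (Set.mem_univ (z j + x)) (Set.mem_univ (z j + yv)) ha hb hab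
    have hx : a • (z j + x) + (1 - a) • (z j + yv) = z j + (a • x + (1 - a) • yv) := by
      simp only [smul_eq_mul]; ring
    rw [hx] at key
    simp only [hh, smul_eq_mul] at key ⊢
    nlinarith [key]
  have key : ∀ j, ∑ i, (lam i : ℝ) * h j (y i j) ≤ h j (∑ i, (lam i : ℝ) * y i j) :=
    fun j => aux_sum (h j) (hconv j) (by simp [hh]) (fun i => y i j) lam (horthant j) _
  calc ∑ i, (lam i : ℝ) * ((∑ j, f j (z j + y i j)) - ∑ j, f j (z j))
      = ∑ j, ∑ i, (lam i : ℝ) * h j (y i j) := by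
        rw [Finset.sum_comm]
        refine Finset.sum_congr rfl fun i _ => ?_
        rw [← Finset.sum_sub_distrib, Finset.mul_sum]
    _ ≤ ∑ j, h j (∑ i, (lam i : ℝ) * y i j) := Finset.sum_le_sum fun j _ => key j
    _ = _ := by rw [← Finset.sum_sub_distrib]
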